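/- Let t ∈ ℕ, let c'_0, …, c'_t, c, d be real numbers with d ≠ 0, and let β_0 < β_1 < … < β_t be natural numbers. If the polynomial f(X) = ∑_{j=0}^{t} c'_j (c + dX)^{β_j} is not identically zero, then f has at most 2t + 1 distinct real roots. Consequently, any set of 2t + 2 distinct real numbers is a hitting set for the set of all polynomials of this form. -/

import Mathlib

open Polynomial

/-- `H` is a hitting set for a set `F` of polynomials over `K` (with points taken in a
`K`-algebra `L`) if every nonzero polynomial of `F` takes a nonzero value at some point of `H`. -/
def IsHittingSet {K L : Type*} [CommSemiring K] [CommSemiring L] [Algebra K L]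
    (H : Set L) (F : Set (Polynomial K)) : Prop :=
  ∀ f ∈ F, f ≠ 0 → ∃ θ ∈ H, Polynomial.aeval θ f ≠ 0

lemma deriv_support_card (h : ℝ[X]) (h0 : h.coeff 0 ≠ 0) :
    (derivative h).support.card + 1 ≤ h.support.card := by
  have hle : (derivative h).support.card ≤ (h.support.erase 0).card := by
    apply Finset.card_le_card_of_injOn (fun n => n + 1)
    · intro n hn
      simp only [Finset.mem_coe]
      rw [Finset.mem_erase]
      exact ⟨Nat.succ_ne_zero n, (mem_support_derivative (p := h) (n := n)).1 hn⟩
    · intro a _ b _ hab; simpa using hab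
  have h0' : (0 : ℕ) ∈ h.support := mem_support_iff.2 h0
  have := Finset.card_erase_of_mem h0'
  have hpos : 0 < h.support.card := Finset.card_pos.2 ⟨0, h0'⟩
  omega

lemma exists_factor (g : ℝ[X]) (hg : g ≠ 0) :
    ∃ (m : ℕ) (h : ℝ[X]), g = X ^ m * h ∧ h.coeff 0 ≠ 0 ∧
      h.support.card ≤ g.support.card := by
  obtain ⟨h, hh⟩ : (X : ℝ[X]) ^ g.natTrailingDegree ∣ g :=
    X_pow_dvd_iff.mpr fun d hd => coeff_eq_zero_of_lt_natTrailingDegree hd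
  set m := g.natTrailingDegree with hm
  clear_value m
  have hc : h.coeff 0 = g.coeff m := by
    conv_rhs => rw [hh]
    exact (by simpa using coeff_X_pow_mul h m 0 : (X ^ m * h).coeff m = h.coeff 0).symm
  refine ⟨m, h, hh, ?_, ?_⟩
  · rw [hc, hm, ← trailingCoeff]; exact trailingCoeff_nonzero_iff_nonzero.mpr hg
  · apply Finset.card_le_card_of_injOn (fun n => n + m)
    · intro n hn
      simp only [Finset.mem_coe] at hn ⊢
      rw [mem_support_iff] at hn ⊢
      have : g.coeff (n + m) = h.coeff n := by conv_lhs => rw [hh, coeff_X_pow_mul]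
      rwa [this]
    · intro a _ b _ hab; simpa using hab

lemma fewnomial_roots : ∀ (k : ℕ) (g : ℝ[X]), g ≠ 0 → g.support.card ≤ k →
    g.roots.toFinset.card + 1 ≤ 2 * k := by
  intro k
  induction k with
  | zero =>
    intro g hg hs
    exact absurd (support_eq_empty.mp (Finset.card_eq_zero.mp (Nat.le_zero.mp hs))) hg
  | succ k ih =>
    intro g hg hs
    obtain ⟨m, h, hh, h0, hcard⟩ := exists_factor g hg
    have hX : (X : ℝ[X]) ^ m ≠ 0 := pow_ne_zero _ X_ne_zero
    have hne : h ≠ 0 := fun h' => hg (by rw [hh, h', mul_zero])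
    have hroots : g.roots.toFinset.card ≤ h.roots.toFinset.card + 1 := by
      rw [hh, roots_mul (hh ▸ hg), Multiset.toFinset_add]
      refine le_trans (Finset.card_union_le _ _) ?_
      have : ((X : ℝ[X]) ^ m).roots.toFinset ⊆ {0} := by
        intro x hx
        rw [Multiset.mem_toFinset, mem_roots hX] at hx
        have := hx
        simp only [IsRoot, eval_pow, eval_X] at this
        simp [pow_eq_zero_iff'.mp this |>.1]
      have h1 := Finset.card_le_card this
      simp only [Finset.card_singleton] at h1
      omega
    by_cases hd : derivative h = 0
    · have : h.roots = 0 := by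
        rw [eq_C_of_derivative_eq_zero hd, roots_C]
      rw [this] at hroots
      simp at hroots
      omega
    · have h1 := card_roots_toFinset_le_derivative h
      have h2 := ih (derivative h) hd (by
        have := deriv_support_card h h0
        omega)
      omega

lemma part1 (t : ℕ) (c' : Fin (t + 1) → ℝ) (c d : ℝ) (β : Fin (t + 1) → ℕ) (hd : d ≠ 0)
    (hf : (∑ j, Polynomial.C (c' j) * (Polynomial.C c + Polynomial.C d * X) ^ β j) ≠ 0) :
    {x : ℝ | (∑ j, Polynomial.C (c' j) *
        (Polynomial.C c + Polynomial.C d * X) ^ β j).eval x = 0}.Finite ∧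
      {x : ℝ | (∑ j, Polynomial.C (c' j) *
        (Polynomial.C c + Polynomial.C d * X) ^ β j).eval x = 0}.ncard ≤ 2 * t + 1 := by
  set p : ℝ[X] := ∑ j, Polynomial.C (c' j) * X ^ β j with hp
  set q : ℝ[X] := Polynomial.C c + Polynomial.C d * X with hq
  have hcomp : (∑ j, Polynomial.C (c' j) * (Polynomial.C c + Polynomial.C d * X) ^ β j)
      = p.comp q := by
    simp [hp, hq, Polynomial.eval₂_finset_sum, Polynomial.comp]
  have hpne : p ≠ 0 := by
    intro h; apply hf; rw [hcomp, h, zero_comp]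
  have hsupp : p.support.card ≤ t + 1 := by
    have hsub : p.support ⊆ Finset.image β Finset.univ := by
      intro n hn
      rw [mem_support_iff] at hn
      simp only [hp, finset_sum_coeff, coeff_C_mul, coeff_X_pow] at hn
      by_contra hc
      apply hn
      apply Finset.sum_eq_zero
      intro j _
      have hne : β j ≠ n := fun h => hc (Finset.mem_image.mpr ⟨j, Finset.mem_univ j, h⟩)
      simp [Ne.symm hne]
    refine le_trans (Finset.card_le_card hsub) ?_
    refine le_trans Finset.card_image_le ?_
    simp
  have hfew := fewnomial_roots (t + 1) p hpne hsupp
  set B : Set ℝ := {y : ℝ | p.eval y = 0} with hB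
  have hBeq : B = ↑p.roots.toFinset := by
    ext y; simp [hB, Multiset.mem_toFinset, mem_roots hpne, IsRoot]
  have hBfin : B.Finite := by rw [hBeq]; exact (p.roots.toFinset : Finset ℝ).finite_toSet
  have hBcard : B.ncard ≤ 2 * t + 1 := by
    rw [hBeq, Set.ncard_coe_finset]; omega
  have hset : {x : ℝ | (∑ j, Polynomial.C (c' j) *
      (Polynomial.C c + Polynomial.C d * X) ^ β j).eval x = 0}
      = (fun x : ℝ => c + d * x) ⁻¹' B := by
    ext x
    simp [hcomp, eval_comp, hq, hB]
  have hinj : Function.Injective (fun x : ℝ => c + d * x) := by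
    intro a b hab
    simp only at hab
    have : d * a = d * b := by linarith
    exact mul_left_cancel₀ hd this
  constructor
  · rw [hset]; exact Set.Finite.preimage hinj.injOn hBfin
  · rw [hset]
    have h1 : ((fun x : ℝ => c + d * x) ⁻¹' B).ncard
        = ((fun x : ℝ => c + d * x) '' ((fun x : ℝ => c + d * x) ⁻¹' B)).ncard :=
      (Set.ncard_image_of_injective _ hinj).symm
    rw [h1]
    exact le_trans (Set.ncard_le_ncard (Set.image_preimage_subset _ _) hBfin) hBcard


/-- Let `c'_0, …, c'_t, c, d` be real numbers with `d ≠ 0` and `β_0 < β_1 < … < β_t` natural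
numbers. If `f = ∑_{j=0}^{t} c'_j (c + dX)^{β_j}` is not identically zero then `f` has at most
`2t + 1` distinct real roots; consequently, any set of `2t + 2` distinct real numbers is a
hitting set for the set of all polynomials of this form. -/
theorem stmt13 (t : ℕ) :
    (∀ (c' : Fin (t + 1) → ℝ) (c d : ℝ) (β : Fin (t + 1) → ℕ),
      d ≠ 0 → StrictMono β →
      (∑ j, Polynomial.C (c' j) * (Polynomial.C c + Polynomial.C d * X) ^ β j) ≠ 0 →
      {x : ℝ | (∑ j, Polynomial.C (c' j) *
          (Polynomial.C c + Polynomial.C d * X) ^ β j).eval x = 0}.Finite ∧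
        {x : ℝ | (∑ j, Polynomial.C (c' j) *
          (Polynomial.C c + Polynomial.C d * X) ^ β j).eval x = 0}.ncard ≤ 2 * t + 1) ∧
    ∀ S : Finset ℝ, S.card = 2 * t + 2 →
      IsHittingSet (↑S : Set ℝ)
        {f : ℝ[X] | ∃ (c' : Fin (t + 1) → ℝ) (c d : ℝ) (β : Fin (t + 1) → ℕ),
          d ≠ 0 ∧ StrictMono β ∧
          f = ∑ j, Polynomial.C (c' j) * (Polynomial.C c + Polynomial.C d * X) ^ β j} := by
  refine ⟨fun c' c d β hd _ hf => part1 t c' c d β hd hf, ?_⟩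
  intro S hS f hfmem hf0
  obtain ⟨c', c, d, β, hd, hβ, rfl⟩ := hfmem
  obtain ⟨hfin, hcard⟩ := part1 t c' c d β hd hf0
  by_contra hcon
  push_neg at hcon
  have hsub : (↑S : Set ℝ) ⊆ {x : ℝ | (∑ j, Polynomial.C (c' j) *
      (Polynomial.C c + Polynomial.C d * X) ^ β j).eval x = 0} := by
    intro θ hθ
    have h2 := hcon θ hθ
    rw [show (Polynomial.aeval θ : ℝ[X] → ℝ) = Polynomial.eval θ from
      Polynomial.coe_aeval_eq_eval θ] at h2
    exact h2
  have h1 := Set.ncard_le_ncard hsub hfin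
  rw [Set.ncard_coe_finset, hS] at h1
  omega
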